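/- Let y : [t₀,∞) → [0,∞) be C¹ with y'(t) + (α/(1+t))·y(t) ≤ K·(1+t)^{-2-2β} for t ≥ t₀, where α > 1 + 2β and β, K ≥ 0. Then y(t) ≤ C·(y(t₀)+K)·(1+t)^{-1-2β}. -/

import Mathlib

/-- Weighted Gronwall lemma variant: `y' + (α/(1+t)) y ≤ K (1+t)^{-2-2β}` with
`α > 1 + 2β` gives `y(t) ≲ (y(t₀)+K)(1+t)^{-1-2β}`. -/
theorem stmt_5 (t₀ α β K : ℝ) (ht₀ : 0 ≤ t₀) (hβ : 0 ≤ β) (hα : 1 + 2 * β < α) (hK : 0 ≤ K)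
    (y y' : ℝ → ℝ) (hpos : ∀ t, t₀ ≤ t → 0 ≤ y t)
    (hderiv : ∀ t, t₀ ≤ t → HasDerivAt y (y' t) t)
    (hineq : ∀ t, t₀ ≤ t → y' t + α / (1 + t) * y t ≤ K * (1 + t) ^ (-2 - 2 * β)) :
    ∃ C > 0, ∀ t, t₀ ≤ t → y t ≤ C * (y t₀ + K) * (1 + t) ^ (-1 - 2 * β) := by
  set δ : ℝ := α - 1 - 2 * β with hδdef
  have hδ : 0 < δ := by simp [hδdef]; linarith
  set w : ℝ → ℝ := fun t => y t * (1 + t) ^ α - K / δ * (1 + t) ^ δ with hw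
  -- derivative of w
  have hpos1 : ∀ t : ℝ, t₀ ≤ t → (0:ℝ) < 1 + t := fun t ht => by linarith
  have hone : ∀ t : ℝ, t₀ ≤ t → (1:ℝ) ≤ 1 + t := fun t ht => by linarith
  have hwd : ∀ t, t₀ ≤ t → HasDerivAt w
      (y' t * (1 + t) ^ α + y t * (α * (1 + t) ^ (α - 1)) - K * (1 + t) ^ (δ - 1)) t := by
    intro t ht
    have h1 : HasDerivAt (fun s : ℝ => 1 + s) 1 t := (hasDerivAt_id t).const_add 1
    have hne : (1 + t) ≠ 0 := ne_of_gt (hpos1 t ht)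
    have hpα : HasDerivAt (fun s : ℝ => (1 + s) ^ α) (α * (1 + t) ^ (α - 1)) t := by
      have := (Real.hasDerivAt_rpow_const (p := α) (Or.inl hne)).comp t h1
      simpa [Function.comp_def] using this
    have hpδ : HasDerivAt (fun s : ℝ => (1 + s) ^ δ) (δ * (1 + t) ^ (δ - 1)) t := by
      have := (Real.hasDerivAt_rpow_const (p := δ) (Or.inl hne)).comp t h1
      simpa [Function.comp_def] using this
    have := ((hderiv t ht).mul hpα).sub (hpδ.const_mul (K / δ))
    refine this.congr_deriv ?_
    rw [show K / δ * (δ * (1 + t) ^ (δ - 1)) = K * (1 + t) ^ (δ - 1) by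
      rw [← mul_assoc, div_mul_cancel₀ K hδ.ne']]
  have hwd0 : ∀ t ∈ interior (Set.Ici t₀),
      y' t * (1 + t) ^ α + y t * (α * (1 + t) ^ (α - 1)) - K * (1 + t) ^ (δ - 1) ≤ 0 := by
    intro t ht
    rw [interior_Ici] at ht
    have ht' : t₀ ≤ t := le_of_lt ht
    have h1 : (0:ℝ) < 1 + t := hpos1 t ht'
    have key := hineq t ht'
    have hmul : (y' t + α / (1 + t) * y t) * (1 + t) ^ α
        ≤ K * (1 + t) ^ (-2 - 2 * β) * (1 + t) ^ α :=
      mul_le_mul_of_nonneg_right key (Real.rpow_nonneg h1.le α)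
    have e1 : α / (1 + t) * y t * (1 + t) ^ α = y t * (α * (1 + t) ^ (α - 1)) := by
      rw [Real.rpow_sub h1, Real.rpow_one]
      field_simp
    have e2 : K * (1 + t) ^ (-2 - 2 * β) * (1 + t) ^ α = K * (1 + t) ^ (δ - 1) := by
      rw [mul_assoc, ← Real.rpow_add h1]
      rw [hδdef]; ring_nf
    nlinarith [hmul, e1, e2]
  have hwcont : ContinuousOn w (Set.Ici t₀) := fun t ht =>
    ((hwd t ht).continuousAt).continuousWithinAt
  have hanti : AntitoneOn w (Set.Ici t₀) := by
    apply antitoneOn_of_deriv_nonpos (convex_Ici t₀) hwcont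
    · intro x hx
      rw [interior_Ici] at hx
      exact ((hwd x (le_of_lt hx)).differentiableAt).differentiableWithinAt
    · intro x hx
      have hx' : t₀ ≤ x := le_of_lt (by rwa [interior_Ici] at hx)
      rw [(hwd x hx').deriv]
      exact hwd0 x hx
  refine ⟨(1 + t₀) ^ α + 1 / δ, by positivity, fun t ht => ?_⟩
  have h1 : (0:ℝ) < 1 + t := hpos1 t ht
  have h10 : (0:ℝ) < 1 + t₀ := by linarith
  have hwle : w t ≤ w t₀ := hanti (Set.self_mem_Ici) ht ht
  -- unravel
  have hz : y t * (1 + t) ^ α ≤ y t₀ * (1 + t₀) ^ α + K / δ * (1 + t) ^ δ := by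
    have hKδ : 0 ≤ K / δ * (1 + t₀) ^ δ := by positivity
    simp only [hw] at hwle
    linarith
  have hstep : y t ≤ (y t₀ * (1 + t₀) ^ α + K / δ * (1 + t) ^ δ) * (1 + t) ^ (-α) := by
    have := mul_le_mul_of_nonneg_right hz (Real.rpow_nonneg h1.le (-α))
    have hcancel : (1 + t) ^ α * (1 + t) ^ (-α) = 1 := by
      rw [← Real.rpow_add h1]; simp
    calc y t = y t * ((1 + t) ^ α * (1 + t) ^ (-α)) := by rw [hcancel]; ring
      _ = y t * (1 + t) ^ α * (1 + t) ^ (-α) := by ring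
      _ ≤ _ := this
  have hδe : (1 + t) ^ δ * (1 + t) ^ (-α) = (1 + t) ^ (-1 - 2 * β) := by
    rw [← Real.rpow_add h1]; rw [hδdef]; ring_nf
  have hαe : (1 + t) ^ (-α) ≤ (1 + t) ^ (-1 - 2 * β) :=
    Real.rpow_le_rpow_of_exponent_le (hone t ht) (by linarith)
  have hy0 : 0 ≤ y t₀ := hpos t₀ le_rfl
  calc y t ≤ (y t₀ * (1 + t₀) ^ α + K / δ * (1 + t) ^ δ) * (1 + t) ^ (-α) := hstep
    _ = y t₀ * (1 + t₀) ^ α * (1 + t) ^ (-α) + K / δ * ((1 + t) ^ δ * (1 + t) ^ (-α)) := by ring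
    _ ≤ y t₀ * (1 + t₀) ^ α * (1 + t) ^ (-1 - 2 * β) + K / δ * (1 + t) ^ (-1 - 2 * β) := by
        rw [hδe]
        have : y t₀ * (1 + t₀) ^ α * (1 + t) ^ (-α)
            ≤ y t₀ * (1 + t₀) ^ α * (1 + t) ^ (-1 - 2 * β) := by
          apply mul_le_mul_of_nonneg_left hαe (by positivity)
        linarith
    _ ≤ ((1 + t₀) ^ α + 1 / δ) * (y t₀ + K) * (1 + t) ^ (-1 - 2 * β) := by
        have hp : (0:ℝ) ≤ (1 + t) ^ (-1 - 2 * β) := Real.rpow_nonneg h1.le _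
        have h1a : (0:ℝ) < (1 + t₀) ^ α := Real.rpow_pos_of_pos h10 α
        have hKδ : K / δ = K * (1 / δ) := by ring
        rw [hKδ]
        nlinarith [mul_nonneg (mul_nonneg hK h1a.le) hp,
          mul_nonneg (mul_nonneg hy0 (le_of_lt (one_div_pos.mpr hδ))) hp]
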